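/- Every point of the closed ellipse E_b = {(x,y) : x² + (y/b)² ≤ 1} with 0 < b ≤ 1 is contained in the closed disk of radius 1/b centered at (0, b − 1/b); moreover the point (0, b) lies on the boundary of that disk. More generally, for every boundary point ζ of E_b there is a closed disk of radius 1/b containing E_b with ζ on its boundary circle. -/

import Mathlib

open Metric

set_option maxHeartbeats 1000000 in
lemma key (b x y : ℝ) (hb : 0 < b) (hb1 : b ≤ 1) (hxy : x ^ 2 + (y / b) ^ 2 = 1) :
    ∃ c : ℂ, dist (⟨x, y⟩ : ℂ) c = 1 / b ∧
      {z : ℂ | z.re ^ 2 + (z.im / b) ^ 2 ≤ 1} ⊆ closedBall c (1 / b) := by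
  have hb2 : b ^ 2 ≤ 1 := by nlinarith
  set N : ℝ := Real.sqrt (x ^ 2 + (y / b ^ 2) ^ 2) with hNdef
  have hn2 : x ^ 2 + (y / b ^ 2) ^ 2 ≥ 0 := by positivity
  have hN2 : N ^ 2 = x ^ 2 + (y / b ^ 2) ^ 2 := Real.sq_sqrt hn2
  have hNnn : 0 ≤ N := Real.sqrt_nonneg _
  clear_value N
  clear hNdef hn2
  have hN2' : b ^ 4 * N ^ 2 = b ^ 4 * x ^ 2 + y ^ 2 := by
    rw [hN2]; field_simp
  have hy2 : (y / b) ^ 2 ≤ 1 := by nlinarith [sq_nonneg x]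
  have hq : (y / b ^ 2) ^ 2 = (y / b) ^ 2 / b ^ 2 := by
    field_simp
  have h1b : (1:ℝ) ≤ 1 / b ^ 2 := by
    rw [le_div_iff₀ (by positivity)]; linarith
  have hN1 : 1 ≤ N := by
    have h1 : 1 ≤ N ^ 2 := by
      rw [hN2, hq]
      have : (y / b) ^ 2 ≤ (y / b) ^ 2 / b ^ 2 := by
        rw [le_div_iff₀ (by positivity)]
        nlinarith [sq_nonneg (y/b)]
      linarith
    nlinarith
  have hNpos : 0 < N := lt_of_lt_of_le one_pos hN1
  have hNle : N ≤ 1 / b := by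
    have h2 : N ^ 2 ≤ (1/b) ^ 2 := by
      rw [hN2, hq]
      have e1 : (1/b : ℝ)^2 = 1 / b^2 := by rw [div_pow]; norm_num
      rw [e1]
      have key1 : x ^ 2 ≤ (1 - (y/b)^2) * (1 / b ^ 2) := by
        nlinarith [sq_nonneg (y/b)]
      have e2 : (1 - (y/b)^2) * (1/b^2) + (y/b)^2 / b^2 = 1 / b^2 := by ring
      linarith
    have hbinv : (0:ℝ) < 1/b := by positivity
    nlinarith
  have hNb : b * N ≤ 1 := by
    calc b * N ≤ b * (1/b) := by nlinarith
    _ = 1 := by field_simp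
  have hbN0 : (b * N : ℝ) ≠ 0 := by positivity
  have hb30 : (b ^ 3 * N : ℝ) ≠ 0 := by positivity
  have hb0 : (b : ℝ) ≠ 0 := ne_of_gt hb
  have hN0 : (N : ℝ) ≠ 0 := ne_of_gt hNpos
  have hlast : (x / (b * N)) ^ 2 + (y / (b ^ 3 * N)) ^ 2 = (1/b)^2 := by
    field_simp
    linear_combination (-1 : ℝ) * hN2'
  refine ⟨⟨x - x / (b * N), y - y / (b ^ 3 * N)⟩, ?_, ?_⟩
  · rw [Complex.dist_eq_re_im]
    show Real.sqrt ((x - (x - x / (b * N))) ^ 2 + (y - (y - y / (b ^ 3 * N))) ^ 2) = 1 / b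
    rw [show (1/b : ℝ) = Real.sqrt ((1/b)^2) by rw [Real.sqrt_sq (by positivity)]]
    congr 1
    rw [← hlast]
    ring
  · intro z hz
    obtain ⟨u, v⟩ := z
    simp only [Set.mem_setOf_eq] at hz
    rw [mem_closedBall, Complex.dist_eq_re_im]
    show Real.sqrt ((u - (x - x / (b * N))) ^ 2 + (v - (y - y / (b ^ 3 * N))) ^ 2) ≤ 1 / b
    rw [show (1/b : ℝ) = Real.sqrt ((1/b)^2) by rw [Real.sqrt_sq (by positivity)]]
    apply Real.sqrt_le_sqrt
    have hD : (x - u) ^ 2 + (y - v) ^ 2 ≤ 2 * ((x - u) * x + (y - v) * y / b ^ 2) := by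
      have e : 2 * ((x - u) * x + (y - v) * y / b ^ 2)
          = (x - u) ^ 2 + (y - v) ^ 2 / b ^ 2 + (x ^ 2 + (y/b)^2) - (u ^ 2 + (v/b)^2) := by
        field_simp; ring
      rw [e, hxy]
      have : (y - v) ^ 2 ≤ (y - v) ^ 2 / b ^ 2 := by
        rw [le_div_iff₀ (by positivity)]
        nlinarith [sq_nonneg (y - v)]
      linarith
    have hbNinv : 1 ≤ 1 / (b * N) := by
      rw [le_div_iff₀ (by positivity)]; linarith
    have expand : (u - (x - x / (b * N))) ^ 2 + (v - (y - y / (b ^ 3 * N))) ^ 2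
        = (u - x) ^ 2 + (v - y) ^ 2
          - (2 / (b * N)) * ((x - u) * x + (y - v) * y / b ^ 2)
          + ((x / (b * N)) ^ 2 + (y / (b ^ 3 * N)) ^ 2) := by
      field_simp
      ring
    rw [expand, hlast]
    have hDpos : 0 ≤ (x - u) * x + (y - v) * y / b ^ 2 := by
      nlinarith [sq_nonneg (x-u), sq_nonneg (y-v)]
    have h2 : (2 :ℝ) ≤ 2 / (b * N) := by
      rw [le_div_iff₀ (by positivity)]; linarith
    nlinarith [sq_nonneg (x-u), sq_nonneg (y-v)]

/-- The ellipse `E_b` is `(1/b)`-circular: it is contained in the closed disk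
of radius `1/b` centered at `(0, b - 1/b)`, whose boundary passes through
`(0, b)`; and more generally every boundary point of `E_b` lies on the
boundary circle of some closed disk of radius `1/b` containing `E_b`. -/
theorem ellipse_circular (b : ℝ) (hb : 0 < b) (hb1 : b ≤ 1) :
    ({z : ℂ | z.re ^ 2 + (z.im / b) ^ 2 ≤ 1} ⊆
        closedBall (Complex.I * ((b : ℂ) - 1 / b)) (1 / b)) ∧
    dist (Complex.I * (b : ℂ)) (Complex.I * ((b : ℂ) - 1 / b)) = 1 / b ∧
    ∀ ζ ∈ frontier {z : ℂ | z.re ^ 2 + (z.im / b) ^ 2 ≤ 1},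
      ∃ c : ℂ, dist ζ c = 1 / b ∧
        {z : ℂ | z.re ^ 2 + (z.im / b) ^ 2 ≤ 1} ⊆ closedBall c (1 / b) := by
  have hb0 : (b : ℝ) ≠ 0 := ne_of_gt hb
  have hc : (Complex.I * ((b : ℂ) - 1 / b)) = (⟨0, b - 1/b⟩ : ℂ) := by
    rw [show ((b:ℂ) - 1/b) = ((b - 1/b : ℝ) : ℂ) by push_cast; ring]
    apply Complex.ext <;> simp
  have hb2 : b ^ 2 ≤ 1 := by nlinarith
  have h1b : (1:ℝ) ≤ 1 / b ^ 2 := by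
    rw [le_div_iff₀ (by positivity)]; linarith
  refine ⟨?_, ?_, ?_⟩
  · intro z hz
    obtain ⟨u, v⟩ := z
    simp only [Set.mem_setOf_eq] at hz
    rw [hc, mem_closedBall, Complex.dist_eq_re_im]
    show Real.sqrt ((u - 0) ^ 2 + (v - (b - 1/b)) ^ 2) ≤ 1 / b
    have main : (u - 0) ^ 2 + (v - (b - 1/b)) ^ 2 ≤ (1/b)^2 := ?_
    · calc Real.sqrt ((u - 0) ^ 2 + (v - (b - 1/b)) ^ 2)
          ≤ Real.sqrt ((1/b)^2) := Real.sqrt_le_sqrt main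
        _ = 1/b := Real.sqrt_sq (by positivity)
    have hbv : (1/b^2 - 1) * (b - v)^2 ≥ 0 := by nlinarith [sq_nonneg (b - v)]
    have expand : (u - 0) ^ 2 + (v - (b - 1/b)) ^ 2
        = u ^ 2 + (v - b) ^ 2 + 2 * (v - b) * (1/b) + (1/b)^2 := by ring
    rw [expand]
    have hkey : u ^ 2 + (v - b) ^ 2 + 2 * (v - b) * (1/b) ≤ 0 := by
      have e : 2 * (b - v) * (1/b) = (b - v)^2 / b^2 + 1 - (v/b)^2 := by
        field_simp; ring
      have h3 : (b - v)^2 ≤ (b - v)^2 / b^2 := by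
        rw [le_div_iff₀ (by positivity)]
        nlinarith [sq_nonneg (b-v)]
      nlinarith
    linarith
  · rw [Complex.dist_eq]
    have e : Complex.I * (b : ℂ) - Complex.I * ((b : ℂ) - 1 / b)
        = Complex.I * ((1/b : ℝ) : ℂ) := by push_cast; ring
    rw [e, norm_mul, Complex.norm_I, Complex.norm_real, one_mul, Real.norm_eq_abs,
      abs_of_pos (by positivity)]
  · intro ζ hζ
    have hcont : Continuous fun z : ℂ => z.re ^ 2 + (z.im / b) ^ 2 := by
      fun_prop
    have hfr : ζ.re ^ 2 + (ζ.im / b) ^ 2 = 1 := by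
      have := frontier_le_subset_eq hcont continuous_const hζ
      simpa using this
    obtain ⟨c, h1, h2⟩ := key b ζ.re ζ.im hb hb1 hfr
    exact ⟨c, h1, h2⟩
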